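/- Let N ≥ 1 and H ≥ 1 be integers, let 0 < L ≤ U be reals with κ = U/L, and let x_1, …, x_M ∈ ℝ^N (M ≥ 1) be vectors all of whose entries lie in [H·L, H·U]. Fix nonzero reals p < q ≤ 1, and let j_p ∈ {1, …, M} be an index maximizing f(x_j, p) over j, where f(x, p) = ((1/N)·∑_{i=1}^N x_i^p)^{1/p}. Then the maximizer at p is nearly optimal at q: max_{j ∈ {1,…,M}} f(x_j, q) − f(x_{j_p}, q) ≤ (q − p)·U·H·κ·ln κ. -/

import Mathlib

open Real BigOperators Finset

/-- Generalized `p`-mean of a vector `x ∈ ℝ^N` for nonzero real exponent `p`. -/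
noncomputable def pmean {N : ℕ} (x : Fin N → ℝ) (p : ℝ) : ℝ :=
  ((1 / N : ℝ) * ∑ i, x i ^ p) ^ (1 / p)

/-- Bernoulli mgf bound (core of Hoeffding's lemma). -/
lemma bern_bound {θ : ℝ} (h0 : 0 ≤ θ) (h1 : θ ≤ 1) (h : ℝ) :
    Real.log (1 - θ + θ * Real.exp h) ≤ θ * h + h ^ 2 / 8 := by
  rcases eq_or_lt_of_le h0 with rfl | h0'
  · simp
    positivity
  rcases eq_or_lt_of_le h1 with rfl | h1'
  · simp [Real.log_exp]
    positivity
  -- now 0 < θ < 1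
  set D : ℝ → ℝ := fun t => 1 - θ + θ * Real.exp t with hD
  have hDpos : ∀ t, 0 < D t := fun t => by
    have := Real.exp_pos t
    simp only [hD]; nlinarith
  have hDderiv : ∀ t, HasDerivAt D (θ * Real.exp t) t := fun t => by
    exact ((Real.hasDerivAt_exp t).const_mul θ).const_add (1 - θ)
  set g : ℝ → ℝ := fun t => θ * Real.exp t / D t - θ - t / 4 with hg
  have hgderiv : ∀ t, HasDerivAt g
      ((θ * Real.exp t * D t - θ * Real.exp t * (θ * Real.exp t)) / (D t) ^ 2 - 1 / 4) t := by
    intro t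
    have h1' : HasDerivAt (fun t => θ * Real.exp t) (θ * Real.exp t) t :=
      (Real.hasDerivAt_exp t).const_mul θ
    have h2' : HasDerivAt (fun t => θ * Real.exp t / D t)
        ((θ * Real.exp t * D t - θ * Real.exp t * (θ * Real.exp t)) / (D t) ^ 2) t :=
      h1'.div (hDderiv t) (ne_of_gt (hDpos t))
    exact (h2'.sub_const θ).sub ((hasDerivAt_id t).div_const 4)
  have hgderivnonpos : ∀ t, (θ * Real.exp t * D t - θ * Real.exp t * (θ * Real.exp t)) / (D t) ^ 2 - 1 / 4 ≤ 0 := by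
    intro t
    have hDt := hDpos t
    have hnum : θ * Real.exp t * D t - θ * Real.exp t * (θ * Real.exp t) ≤ (D t) ^ 2 / 4 := by
      nlinarith [sq_nonneg (θ * Real.exp t - D t / 2)]
    have h2 : (θ * Real.exp t * D t - θ * Real.exp t * (θ * Real.exp t)) / (D t) ^ 2
        ≤ ((D t) ^ 2 / 4) / (D t) ^ 2 :=
      (div_le_div_iff_of_pos_right (by positivity)).mpr hnum
    have h3 : ((D t) ^ 2 / 4) / (D t) ^ 2 = 1 / 4 := by
      field_simp
    rw [h3] at h2
    linarith
  have hganti : Antitone g := by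
    apply antitone_of_deriv_nonpos
    · intro t; exact (hgderiv t).differentiableAt
    · intro t; rw [(hgderiv t).deriv]; exact hgderivnonpos t
  have hg0 : g 0 = 0 := by simp [hg, hD]
  set G : ℝ → ℝ := fun t => Real.log (D t) - θ * t - t ^ 2 / 8 with hGdef
  have hGderiv : ∀ t, HasDerivAt G (g t) t := by
    intro t
    have hlog : HasDerivAt (fun t => Real.log (D t)) (θ * Real.exp t / D t) t :=
      (hDderiv t).log (ne_of_gt (hDpos t))
    have : HasDerivAt G (θ * Real.exp t / D t - θ - 2 * t / 8) t := by
      have h' := (hlog.sub ((hasDerivAt_id t).const_mul θ)).sub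
        (((hasDerivAt_id t).pow 2).div_const 8)
      simp at h'; exact h'
    convert this using 1
    simp [hg]; ring
  have hG0 : G 0 = 0 := by simp [hGdef, hD]
  have key : ∀ t, G t ≤ 0 := by
    intro t
    rcases le_or_gt 0 t with ht | ht
    · have hGdiff : Differentiable ℝ G := fun u => (hGderiv u).differentiableAt
      have : AntitoneOn G (Set.Ici 0) := by
        apply antitoneOn_of_deriv_nonpos (convex_Ici 0) hGdiff.continuous.continuousOn
        · intro x _; exact (hGderiv x).differentiableAt.differentiableWithinAt
        · intro x hx
          rw [interior_Ici] at hx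
          rw [(hGderiv x).deriv]
          have : g x ≤ g 0 := hganti hx.le
          rw [hg0] at this; exact this
      have := this (Set.self_mem_Ici) (Set.mem_Ici.mpr ht) ht
      rwa [hG0] at this
    · have hGdiff : Differentiable ℝ G := fun u => (hGderiv u).differentiableAt
      have : MonotoneOn G (Set.Iic 0) := by
        apply monotoneOn_of_deriv_nonneg (convex_Iic 0) hGdiff.continuous.continuousOn
        · intro x _; exact (hGderiv x).differentiableAt.differentiableWithinAt
        · intro x hx
          rw [interior_Iic] at hx
          rw [(hGderiv x).deriv]
          have : g 0 ≤ g x := hganti hx.le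
          rw [hg0] at this; exact this
      have := this (Set.mem_Iic.mpr ht.le) (Set.self_mem_Iic) ht.le
      rwa [hG0] at this
  have := key h
  simp only [hGdef] at this
  linarith

lemma jensen_exp {N : ℕ} (w v : Fin N → ℝ) (hw : ∀ i, 0 ≤ w i) (hw1 : ∑ i, w i = 1) :
    Real.exp (∑ i, w i * v i) ≤ ∑ i, w i * Real.exp (v i) := by
  have := convexOn_exp.map_sum_le (t := Finset.univ) (w := w) (p := v)
    (fun i _ => hw i) hw1 (fun i _ => Set.mem_univ _)
  simpa [smul_eq_mul] using this

lemma hoeff_sum {N : ℕ} (w s : Fin N → ℝ) (hw : ∀ i, 0 < w i) (hw1 : ∑ i, w i = 1)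
    (c d δ : ℝ) (hs : ∀ i, s i ∈ Set.Icc c d) :
    Real.log (∑ i, w i * Real.exp (δ * s i))
      ≤ δ * (∑ i, w i * s i) + δ ^ 2 * (d - c) ^ 2 / 8 := by
  have hne : (Finset.univ : Finset (Fin N)).Nonempty := by
    by_contra h
    rw [Finset.not_nonempty_iff_eq_empty] at h
    rw [h] at hw1; simp at hw1
  obtain ⟨i0, _⟩ := hne
  have hcd : c ≤ d := le_trans (hs i0).1 (hs i0).2
  set m : ℝ := ∑ i, w i * s i with hm
  have hmc : c ≤ m := by
    have : ∑ i, w i * c ≤ m := Finset.sum_le_sum fun i _ =>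
      mul_le_mul_of_nonneg_left (hs i).1 (hw i).le
    rwa [← Finset.sum_mul, hw1, one_mul] at this
  have hmd : m ≤ d := by
    have : m ≤ ∑ i, w i * d := Finset.sum_le_sum fun i _ =>
      mul_le_mul_of_nonneg_left (hs i).2 (hw i).le
    rwa [← Finset.sum_mul, hw1, one_mul] at this
  rcases eq_or_lt_of_le hcd with rfl | hcd'
  · -- degenerate: all s i = c
    have hsc : ∀ i, s i = c := fun i => le_antisymm (hs i).2 (hs i).1
    have : ∑ i, w i * Real.exp (δ * s i) = Real.exp (δ * c) := by
      simp only [hsc, ← Finset.sum_mul]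
      rw [hw1, one_mul]
    rw [this, Real.log_exp]
    have : m = c := le_antisymm hmd hmc
    rw [this]
    nlinarith [sq_nonneg δ]
  · set θ : ℝ := (m - c) / (d - c) with hθ
    have hdc : (0 : ℝ) < d - c := by linarith
    have hθ0 : 0 ≤ θ := div_nonneg (by linarith) hdc.le
    have hθ1 : θ ≤ 1 := by
      rw [div_le_one hdc]; linarith
    have chord : ∀ i, Real.exp (δ * s i) ≤
        (d - s i) / (d - c) * Real.exp (δ * c) + (s i - c) / (d - c) * Real.exp (δ * d) := by
      intro i
      have ha : (0:ℝ) ≤ (d - s i) / (d - c) := div_nonneg (by linarith [(hs i).2]) hdc.le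
      have hb : (0:ℝ) ≤ (s i - c) / (d - c) := div_nonneg (by linarith [(hs i).1]) hdc.le
      have hab : (d - s i) / (d - c) + (s i - c) / (d - c) = 1 := by
        field_simp
        ring
      have := convexOn_exp.2 (Set.mem_univ (δ * c)) (Set.mem_univ (δ * d)) ha hb hab
      simp only [smul_eq_mul] at this
      have harg : (d - s i) / (d - c) * (δ * c) + (s i - c) / (d - c) * (δ * d) = δ * s i := by
        field_simp; ring
      rwa [harg] at this
    have hsum : ∑ i, w i * ((d - s i) / (d - c) * Real.exp (δ * c)
          + (s i - c) / (d - c) * Real.exp (δ * d))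
        = (1 - θ) * Real.exp (δ * c) + θ * Real.exp (δ * d) := by
      have step : ∀ i, w i * ((d - s i) / (d - c) * Real.exp (δ * c)
            + (s i - c) / (d - c) * Real.exp (δ * d))
          = w i * (d - s i) * (Real.exp (δ * c) / (d - c))
            + w i * (s i - c) * (Real.exp (δ * d) / (d - c)) := by
        intro i; ring
      rw [Finset.sum_congr rfl fun i _ => step i, Finset.sum_add_distrib,
        ← Finset.sum_mul, ← Finset.sum_mul]
      have e1 : ∑ i, w i * (d - s i) = d - m := by
        simp only [mul_sub, Finset.sum_sub_distrib, ← Finset.sum_mul, hw1, one_mul]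
        rw [hm]
      have e2 : ∑ i, w i * (s i - c) = m - c := by
        simp only [mul_sub, Finset.sum_sub_distrib, ← Finset.sum_mul, hw1, one_mul]
        rw [hm]
      rw [e1, e2, hθ]
      field_simp
      ring
    have hle : ∑ i, w i * Real.exp (δ * s i)
        ≤ (1 - θ) * Real.exp (δ * c) + θ * Real.exp (δ * d) := by
      rw [← hsum]
      exact Finset.sum_le_sum fun i _ => mul_le_mul_of_nonneg_left (chord i) (hw i).le
    have hpos : 0 < ∑ i, w i * Real.exp (δ * s i) :=
      Finset.sum_pos (fun i _ => mul_pos (hw i) (Real.exp_pos _)) ⟨i0, Finset.mem_univ i0⟩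
    have hrw : (1 - θ) * Real.exp (δ * c) + θ * Real.exp (δ * d)
        = Real.exp (δ * c) * (1 - θ + θ * Real.exp (δ * (d - c))) := by
      rw [show δ * d = δ * c + δ * (d - c) by ring, Real.exp_add]; ring
    have hb2 : 0 < 1 - θ + θ * Real.exp (δ * (d - c)) := by
      rcases eq_or_lt_of_le hθ0 with h | h
      · rw [← h]; norm_num
      · nlinarith [Real.exp_pos (δ * (d - c))]
    calc Real.log (∑ i, w i * Real.exp (δ * s i))
        ≤ Real.log (Real.exp (δ * c) * (1 - θ + θ * Real.exp (δ * (d - c)))) := by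
          apply Real.log_le_log hpos
          rw [← hrw]; exact hle
      _ = δ * c + Real.log (1 - θ + θ * Real.exp (δ * (d - c))) := by
          rw [Real.log_mul (ne_of_gt (Real.exp_pos _)) (ne_of_gt hb2), Real.log_exp]
      _ ≤ δ * c + (θ * (δ * (d - c)) + (δ * (d - c)) ^ 2 / 8) := by
          linarith [bern_bound hθ0 hθ1 (δ * (d - c))]
      _ = δ * m + δ ^ 2 * (d - c) ^ 2 / 8 := by
          have hθδ : θ * (δ * (d - c)) = δ * (m - c) := by
            rw [hθ]; field_simp
          rw [hθδ]; ring

noncomputable def psiF {N : ℕ} (z : Fin N → ℝ) (t : ℝ) : ℝ :=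
  Real.log ((1 / N : ℝ) * ∑ i, z i ^ t)

noncomputable def muF {N : ℕ} (z : Fin N → ℝ) (t : ℝ) : ℝ :=
  (∑ i, z i ^ t * Real.log (z i)) / (∑ i, z i ^ t)

lemma psiF_zero {N : ℕ} (hN : 1 ≤ N) (z : Fin N → ℝ) : psiF z 0 = 0 := by
  have hN0 : (N : ℝ) ≠ 0 := Nat.cast_ne_zero.mpr (by omega)
  simp [psiF, Real.rpow_zero, hN0]

section tangent

variable {N : ℕ} (hN : 1 ≤ N) (z : Fin N → ℝ) (a b : ℝ) (ha : 0 < a)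
  (hz : ∀ i, z i ∈ Set.Icc a b)

include hN ha hz in
lemma sum_rpow_pos (t : ℝ) : 0 < ∑ i, z i ^ t := by
  have : Nonempty (Fin N) := ⟨⟨0, hN⟩⟩
  exact Finset.sum_pos (fun i _ => Real.rpow_pos_of_pos (lt_of_lt_of_le ha (hz i).1) t)
    Finset.univ_nonempty

include hN ha hz in
lemma psiF_tangent (t δ : ℝ) :
    psiF z t + δ * muF z t ≤ psiF z (t + δ) ∧
    psiF z (t + δ) ≤ psiF z t + δ * muF z t
      + δ ^ 2 * (Real.log b - Real.log a) ^ 2 / 8 := by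
  have hzpos : ∀ i, 0 < z i := fun i => lt_of_lt_of_le ha (hz i).1
  have hS : ∀ u : ℝ, 0 < ∑ i, z i ^ u := sum_rpow_pos hN z a b ha hz
  set S : ℝ → ℝ := fun u => ∑ i, z i ^ u with hSdef
  set w : Fin N → ℝ := fun i => z i ^ t / S t with hwdef
  have hw : ∀ i, 0 < w i := fun i => div_pos (Real.rpow_pos_of_pos (hzpos i) t) (hS t)
  have hw1 : ∑ i, w i = 1 := by
    rw [hwdef]
    rw [← Finset.sum_div]
    exact div_self (ne_of_gt (hS t))
  set s : Fin N → ℝ := fun i => Real.log (z i) with hsdef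
  have hsmem : ∀ i, s i ∈ Set.Icc (Real.log a) (Real.log b) := fun i =>
    ⟨Real.log_le_log ha (hz i).1, Real.log_le_log (hzpos i) (hz i).2⟩
  have key : ∀ i, w i * Real.exp (δ * s i) = z i ^ (t + δ) / S t := by
    intro i
    have h1 : Real.exp (δ * s i) = z i ^ δ := by
      rw [Real.rpow_def_of_pos (hzpos i), mul_comm]
    rw [h1, hwdef]
    simp only []
    rw [div_mul_eq_mul_div, ← Real.rpow_add (hzpos i)]
  have hsumexp : ∑ i, w i * Real.exp (δ * s i) = S (t + δ) / S t := by
    rw [Finset.sum_congr rfl fun i _ => key i, ← Finset.sum_div]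
  have hmu : ∑ i, w i * s i = muF z t := by
    rw [muF]
    rw [show ∑ i, w i * s i = ∑ i, (z i ^ t * Real.log (z i)) / S t from
      Finset.sum_congr rfl fun i _ => by rw [hwdef, hsdef]; simp only []; ring]
    rw [← Finset.sum_div]
  have hlogdiff : ∀ u : ℝ, psiF z u - psiF z t = Real.log (S u / S t) := by
    intro u
    have hN0 : (0 : ℝ) < (1 / N : ℝ) := by
      have : (0:ℝ) < (N:ℝ) := by exact_mod_cast Nat.pos_of_ne_zero (by omega)
      positivity
    rw [psiF, psiF, Real.log_mul (ne_of_gt hN0) (ne_of_gt (hS u)),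
      Real.log_mul (ne_of_gt hN0) (ne_of_gt (hS t)),
      Real.log_div (ne_of_gt (hS u)) (ne_of_gt (hS t))]
    ring
  constructor
  · -- lower bound via Jensen
    have hj := jensen_exp w (fun i => δ * s i) (fun i => (hw i).le) hw1
    rw [hsumexp] at hj
    have h2 : δ * muF z t = ∑ i, w i * (δ * s i) := by
      rw [← hmu, Finset.mul_sum]
      apply Finset.sum_congr rfl
      intro i _; ring
    have h3 : Real.exp (δ * muF z t) ≤ S (t + δ) / S t := by rw [h2]; exact hj
    have h4 : δ * muF z t ≤ Real.log (S (t + δ) / S t) := by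
      rw [← Real.log_exp (δ * muF z t)]
      exact Real.log_le_log (Real.exp_pos _) h3
    have h5 := hlogdiff (t + δ)
    linarith
  · have hh := hoeff_sum w s hw hw1 (Real.log a) (Real.log b) δ hsmem
    rw [hsumexp, hmu] at hh
    have h5 := hlogdiff (t + δ)
    linarith

end tangent

set_option maxHeartbeats 1000000 in
lemma psiF_slope {N : ℕ} (hN : 1 ≤ N) (z : Fin N → ℝ) (a b : ℝ) (ha : 0 < a)
    (hz : ∀ i, z i ∈ Set.Icc a b) (p q : ℝ) (hp : p ≠ 0) (hq : q ≠ 0) (hpq : p < q) :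
    psiF z p / p ≤ psiF z q / q ∧
    psiF z q / q - psiF z p / p ≤ (q - p) * ((Real.log b - Real.log a) ^ 2 / 8) := by
  have hc2 : (0:ℝ) ≤ (Real.log b - Real.log a) ^ 2 / 8 := by positivity
  have T := psiF_tangent hN z a b ha hz
  have hfrac : psiF z q / q - psiF z p / p
      = (psiF z q * p - psiF z p * q) / (p * q) := by
    field_simp
  rcases lt_or_gt_of_ne hp with hpneg | hppos
  · rcases lt_or_gt_of_ne hq with hqneg | hqpos
    · -- p < q < 0
      obtain ⟨B1, A1⟩ := T q (p - q)
      rw [show q + (p - q) = p by ring] at B1 A1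
      obtain ⟨B2, A2⟩ := T q (-q)
      rw [show q + -q = 0 by ring, psiF_zero hN z] at B2 A2
      have hpq' : (0:ℝ) < p * q := mul_pos_of_neg_of_neg hpneg hqneg
      have hnegq : (0:ℝ) ≤ -q := by linarith
      have hqp : (0:ℝ) ≤ q - p := by linarith
      constructor
      · have hnum : (0:ℝ) ≤ psiF z q * p - psiF z p * q := by
          nlinarith [mul_le_mul_of_nonneg_left B1 hnegq, mul_le_mul_of_nonneg_left B2 hqp]
        have := div_nonneg hnum hpq'.le
        rw [← hfrac] at this
        linarith
      · rw [hfrac, div_le_iff₀ hpq']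
        nlinarith [mul_le_mul_of_nonneg_left A1 hnegq, mul_le_mul_of_nonneg_left A2 hqp]
    · -- p < 0 < q
      obtain ⟨B1, A1⟩ := T 0 q
      rw [zero_add, psiF_zero hN z] at B1 A1
      obtain ⟨B2, A2⟩ := T 0 p
      rw [zero_add, psiF_zero hN z] at B2 A2
      have h1 : psiF z p / p ≤ muF z 0 := by
        rw [div_le_iff_of_neg hpneg]
        nlinarith [B2]
      have h2 : muF z 0 ≤ psiF z q / q := by
        rw [le_div_iff₀ hqpos]
        nlinarith [B1]
      have h3 : psiF z q / q ≤ muF z 0 + q * ((Real.log b - Real.log a) ^ 2 / 8) := by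
        rw [div_le_iff₀ hqpos]
        nlinarith [A1]
      have h4 : muF z 0 + p * ((Real.log b - Real.log a) ^ 2 / 8) ≤ psiF z p / p := by
        rw [le_div_iff_of_neg hpneg]
        nlinarith [A2]
      exact ⟨le_trans h1 h2, by nlinarith⟩
  · -- 0 < p < q
    have hqpos : (0:ℝ) < q := lt_trans hppos hpq
    obtain ⟨B1, A1⟩ := T p (q - p)
    rw [show p + (q - p) = q by ring] at B1 A1
    obtain ⟨B2, A2⟩ := T p (-p)
    rw [show p + -p = 0 by ring, psiF_zero hN z] at B2 A2
    have hpq' : (0:ℝ) < p * q := mul_pos hppos hqpos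
    have hqp : (0:ℝ) ≤ q - p := by linarith
    constructor
    · have hnum : (0:ℝ) ≤ psiF z q * p - psiF z p * q := by
        nlinarith [mul_le_mul_of_nonneg_left B1 hppos.le, mul_le_mul_of_nonneg_left B2 hqp]
      have := div_nonneg hnum hpq'.le
      rw [← hfrac] at this
      linarith
    · rw [hfrac, div_le_iff₀ hpq']
      have hA1 := mul_le_mul_of_nonneg_left A1 hppos.le
      have hA2 := mul_le_mul_of_nonneg_left A2 hqp
      linarith [hA1, hA2]

lemma psiF_div_bounds {N : ℕ} (hN : 1 ≤ N) (z : Fin N → ℝ) (a b : ℝ) (ha : 0 < a)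
    (hz : ∀ i, z i ∈ Set.Icc a b) (t : ℝ) (ht : t ≠ 0) :
    Real.log a ≤ psiF z t / t ∧ psiF z t / t ≤ Real.log b := by
  have hb : 0 < b := lt_of_lt_of_le ha (le_trans (hz ⟨0, hN⟩).1 (hz ⟨0, hN⟩).2)
  have hNpos : (0:ℝ) < (N:ℝ) := by exact_mod_cast Nat.pos_of_ne_zero (by omega)
  have hcard : (Finset.univ : Finset (Fin N)).card = N := by simp
  have havg : ∀ c : ℝ, (1 / N : ℝ) * ∑ _i : Fin N, c = c := by
    intro c
    rw [Finset.sum_const, hcard, nsmul_eq_mul]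
    field_simp
  have hSpos : 0 < (1 / N : ℝ) * ∑ i, z i ^ t := by
    have : Nonempty (Fin N) := ⟨⟨0, hN⟩⟩
    have := Finset.sum_pos
      (fun i (_ : i ∈ Finset.univ) => Real.rpow_pos_of_pos (lt_of_lt_of_le ha (hz i).1) t)
      Finset.univ_nonempty
    positivity
  rcases lt_or_gt_of_ne ht with htneg | htpos
  · -- t < 0 : b^t ≤ z^t ≤ a^t
    have hub : (1 / N : ℝ) * ∑ i, z i ^ t ≤ a ^ t := by
      have h1 : ∑ i, z i ^ t ≤ ∑ _i : Fin N, a ^ t :=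
        Finset.sum_le_sum fun i _ => Real.rpow_le_rpow_of_nonpos ha (hz i).1 htneg.le
      calc (1 / N : ℝ) * ∑ i, z i ^ t ≤ (1 / N : ℝ) * ∑ _i : Fin N, a ^ t := by
            apply mul_le_mul_of_nonneg_left h1; positivity
        _ = a ^ t := havg _
    have hlb : b ^ t ≤ (1 / N : ℝ) * ∑ i, z i ^ t := by
      have h1 : ∑ _i : Fin N, b ^ t ≤ ∑ i, z i ^ t :=
        Finset.sum_le_sum fun i _ =>
          Real.rpow_le_rpow_of_nonpos (lt_of_lt_of_le ha (hz i).1) (hz i).2 htneg.le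
      calc b ^ t = (1 / N : ℝ) * ∑ _i : Fin N, b ^ t := (havg _).symm
        _ ≤ (1 / N : ℝ) * ∑ i, z i ^ t := by
            apply mul_le_mul_of_nonneg_left h1; positivity
    have h2 : psiF z t ≤ t * Real.log a := by
      rw [← Real.log_rpow ha]
      exact Real.log_le_log hSpos hub
    have h3 : t * Real.log b ≤ psiF z t := by
      rw [← Real.log_rpow hb]
      exact Real.log_le_log (Real.rpow_pos_of_pos hb t) hlb
    constructor
    · rw [le_div_iff_of_neg htneg]; linarith
    · rw [div_le_iff_of_neg htneg]; linarith
  · -- t > 0 : a^t ≤ z^t ≤ b^t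
    have hub : (1 / N : ℝ) * ∑ i, z i ^ t ≤ b ^ t := by
      have h1 : ∑ i, z i ^ t ≤ ∑ _i : Fin N, b ^ t :=
        Finset.sum_le_sum fun i _ =>
          Real.rpow_le_rpow (le_trans ha.le (hz i).1) (hz i).2 htpos.le
      calc (1 / N : ℝ) * ∑ i, z i ^ t ≤ (1 / N : ℝ) * ∑ _i : Fin N, b ^ t := by
            apply mul_le_mul_of_nonneg_left h1; positivity
        _ = b ^ t := havg _
    have hlb : a ^ t ≤ (1 / N : ℝ) * ∑ i, z i ^ t := by
      have h1 : ∑ _i : Fin N, a ^ t ≤ ∑ i, z i ^ t :=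
        Finset.sum_le_sum fun i _ => Real.rpow_le_rpow ha.le (hz i).1 htpos.le
      calc a ^ t = (1 / N : ℝ) * ∑ _i : Fin N, a ^ t := (havg _).symm
        _ ≤ (1 / N : ℝ) * ∑ i, z i ^ t := by
            apply mul_le_mul_of_nonneg_left h1; positivity
    have h2 : psiF z t ≤ t * Real.log b := by
      rw [← Real.log_rpow hb]
      exact Real.log_le_log hSpos hub
    have h3 : t * Real.log a ≤ psiF z t := by
      rw [← Real.log_rpow ha]
      exact Real.log_le_log (Real.rpow_pos_of_pos ha t) hlb
    constructor
    · rw [le_div_iff₀ htpos]; linarith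
    · rw [div_le_iff₀ htpos]; linarith

lemma pmean_eq_exp {N : ℕ} (hN : 1 ≤ N) (z : Fin N → ℝ) (hz : ∀ i, 0 < z i)
    (t : ℝ) (ht : t ≠ 0) : pmean z t = Real.exp (psiF z t / t) := by
  have hSpos : 0 < (1 / N : ℝ) * ∑ i, z i ^ t := by
    have : Nonempty (Fin N) := ⟨⟨0, hN⟩⟩
    have hNpos : (0:ℝ) < (N:ℝ) := by exact_mod_cast Nat.pos_of_ne_zero (by omega)
    have := Finset.sum_pos
      (fun i (_ : i ∈ Finset.univ) => Real.rpow_pos_of_pos (hz i) t)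
      Finset.univ_nonempty
    positivity
  rw [pmean, psiF, Real.rpow_def_of_pos hSpos]
  congr 1
  rw [mul_one_div]

/-- Warm-start guarantee: over a finite family of vectors with entries in `[H·L, H·U]`
(with `0 < L ≤ U`, `κ = U/L`), a maximizer of the `p`-mean objective is
`((q−p)·U·H·κ·ln κ)`-suboptimal for the `q`-mean objective, for nonzero `p < q ≤ 1`. -/
theorem warm_start_guarantee {N H M : ℕ} (hN : 1 ≤ N) (hH : 1 ≤ H) (hM : 1 ≤ M)
    (L U : ℝ) (hL : 0 < L) (hLU : L ≤ U) (κ : ℝ) (hκ : κ = U / L)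
    (x : Fin M → Fin N → ℝ) (hx : ∀ j i, x j i ∈ Set.Icc ((H : ℝ) * L) ((H : ℝ) * U))
    (p q : ℝ) (hp : p ≠ 0) (hq : q ≠ 0) (hpq : p < q) (hq1 : q ≤ 1)
    (jp : Fin M) (hjp : ∀ j, pmean (x j) p ≤ pmean (x jp) p) :
    (Finset.univ.sup' ⟨⟨0, hM⟩, Finset.mem_univ _⟩ fun j => pmean (x j) q)
        - pmean (x jp) q ≤ (q - p) * U * H * κ * Real.log κ := by
  have hHpos : (0:ℝ) < (H:ℝ) := by exact_mod_cast Nat.pos_of_ne_zero (by omega)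
  have ha : (0:ℝ) < (H:ℝ) * L := by positivity
  have hUpos : (0:ℝ) < U := lt_of_lt_of_le hL hLU
  have hb : (0:ℝ) < (H:ℝ) * U := by positivity
  have hκ1 : (1:ℝ) ≤ κ := by
    rw [hκ, le_div_iff₀ hL]; linarith
  have hκpos : (0:ℝ) < κ := lt_of_lt_of_le one_pos hκ1
  have hR0 : (0:ℝ) ≤ Real.log κ := Real.log_nonneg hκ1
  have hRκ : Real.log κ ≤ κ := le_trans (Real.log_le_sub_one_of_pos hκpos) (by linarith)
  have hlogκ : Real.log ((H:ℝ) * U) - Real.log ((H:ℝ) * L) = Real.log κ := by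
    rw [← Real.log_div (ne_of_gt hb) (ne_of_gt ha), hκ]
    congr 1
    field_simp
  have hzpos : ∀ j i, 0 < x j i := fun j i => lt_of_lt_of_le ha (hx j i).1
  set B : ℝ := (q - p) * U * H * κ * Real.log κ with hB
  have hgapj : ∀ j, pmean (x j) q ≤ pmean (x j) p + B := by
    intro j
    have slope := psiF_slope hN (x j) ((H:ℝ) * L) ((H:ℝ) * U) ha (hx j) p q hp hq hpq
    have bq := psiF_div_bounds hN (x j) ((H:ℝ) * L) ((H:ℝ) * U) ha (hx j) q hq
    rw [pmean_eq_exp hN (x j) (hzpos j) q hq, pmean_eq_exp hN (x j) (hzpos j) p hp]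
    set sp : ℝ := psiF (x j) p / p
    set sq : ℝ := psiF (x j) q / q
    have hmono : sp ≤ sq := slope.1
    have hgap : sq - sp ≤ (q - p) * ((Real.log κ) ^ 2 / 8) := by
      have := slope.2
      rwa [hlogκ] at this
    have hexp_le : Real.exp sq ≤ (H:ℝ) * U := by
      calc Real.exp sq ≤ Real.exp (Real.log ((H:ℝ) * U)) := Real.exp_le_exp.mpr bq.2
        _ = (H:ℝ) * U := Real.exp_log hb
    -- exp sq - exp sp ≤ exp sq * (sq - sp)
    have hexpdiff : Real.exp sq - Real.exp sp ≤ Real.exp sq * (sq - sp) := by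
      have h1 := Real.add_one_le_exp (sp - sq)
      have h2 : Real.exp (sp - sq) * Real.exp sq = Real.exp sp := by
        rw [← Real.exp_add]; congr 1; ring
      nlinarith [mul_le_mul_of_nonneg_right h1 (Real.exp_pos sq).le, Real.exp_pos sq]
    have hstep : Real.exp sq * (sq - sp) ≤ ((H:ℝ) * U) * ((q - p) * ((Real.log κ) ^ 2 / 8)) := by
      apply mul_le_mul hexp_le hgap (by linarith) hb.le
    have hfinal : ((H:ℝ) * U) * ((q - p) * ((Real.log κ) ^ 2 / 8)) ≤ B := by
      rw [hB]
      have key : Real.log κ ^ 2 / 8 ≤ κ * Real.log κ := by nlinarith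
      have hcoef : (0:ℝ) ≤ (q - p) * ((H:ℝ) * U) := by
        apply mul_nonneg (by linarith) hb.le
      nlinarith [mul_le_mul_of_nonneg_left key hcoef]
    linarith
  have hmono_jp : pmean (x jp) p ≤ pmean (x jp) q := by
    have slope := psiF_slope hN (x jp) ((H:ℝ) * L) ((H:ℝ) * U) ha (hx jp) p q hp hq hpq
    rw [pmean_eq_exp hN (x jp) (hzpos jp) q hq, pmean_eq_exp hN (x jp) (hzpos jp) p hp]
    exact Real.exp_le_exp.mpr slope.1
  rw [sub_le_iff_le_add]
  apply Finset.sup'_le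
  intro j _
  calc pmean (x j) q ≤ pmean (x j) p + B := hgapj j
    _ ≤ pmean (x jp) p + B := by linarith [hjp j]
    _ ≤ pmean (x jp) q + B := by linarith [hmono_jp]
    _ = B + pmean (x jp) q := by ring
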